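/- Fix a parking content b = (b₁,...,bₙ) (so b₁ ≤ ⋯ ≤ bₙ and bⱼ ≤ j for all j). Then the sum over all permutations w of Sₙ of t^{exced(π^{b,w})} equals Σ_{k≥0} rook_k(B_b)·(n−k)!·(t−1)^k, where π^{b,w} is the parking function with π_i = b_{w(i)}, exced counts indices i with π_i > i, B_b is the board {(r,c) : 1 ≤ r < b_c}, and rook_k(B_b) is the number of nonattacking k-rook placements on B_b. -/

import Mathlib

open Polynomial Classical Finset Equiv

theorem pow_sum_powerset {α : Type*} [DecidableEq α] {Rg : Type*} [CommRing Rg]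
    (F : Finset α) (Y : Rg) :
    ∑ T ∈ F.powerset, Y ^ T.card = (Y + 1) ^ F.card := by
  calc ∑ T ∈ F.powerset, Y ^ T.card
      = ∑ T ∈ F.powerset, (∏ _i ∈ T, Y) * ∏ _i ∈ F \ T, (1:Rg) := by
        simp [Finset.prod_const]
    _ = ∏ _i ∈ F, (Y + 1) := (Finset.prod_add (fun _ => Y) (fun _ => 1) F).symm
    _ = (Y + 1) ^ F.card := Finset.prod_const _

noncomputable def tFun {n : ℕ} (T : Finset (Fin n × Fin n))
    (huniq : ∀ d ∈ T.image Prod.fst, ∃! p, p ∈ T ∧ p.1 = d)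
    (d : {x // x ∈ T.image Prod.fst}) : {y // y ∈ T.image Prod.snd} :=
  ⟨(T.choose (fun p => p.1 = d.1) (huniq d.1 d.2)).2,
    Finset.mem_image_of_mem Prod.snd (Finset.choose_mem _ _ _)⟩

theorem count_ext {n : ℕ} (T : Finset (Fin n × Fin n))
    (hfst : Set.InjOn Prod.fst (T : Set (Fin n × Fin n)))
    (hsnd : Set.InjOn Prod.snd (T : Set (Fin n × Fin n))) :
    (Finset.univ.filter (fun w : Equiv.Perm (Fin n) => ∀ p ∈ T, w p.1 = p.2)).card
      = Nat.factorial (n - T.card) := by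
  classical
  set D := T.image Prod.fst with hD
  set R := T.image Prod.snd with hR
  have hcardD : D.card = T.card := Finset.card_image_of_injOn hfst
  have hcardR : R.card = T.card := Finset.card_image_of_injOn hsnd
  have huniq : ∀ d ∈ D, ∃! p, p ∈ T ∧ p.1 = d := by
    intro d hd
    obtain ⟨p, hp, hpd⟩ := Finset.mem_image.mp hd
    exact ⟨p, ⟨hp, hpd⟩, fun q ⟨hq, hqd⟩ => hfst hq hp (by rw [hqd, hpd])⟩
  have hchoose : ∀ (p : Fin n × Fin n) (hp : p ∈ T) (h : p.1 ∈ D),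
      T.choose (fun q => q.1 = p.1) (huniq p.1 h) = p := by
    intro p hp h
    obtain ⟨q, hq, hq2⟩ := huniq p.1 h
    have c1 := hq2 _ ⟨Finset.choose_mem _ _ (huniq p.1 h),
      Finset.choose_property _ _ (huniq p.1 h)⟩
    have c2 := hq2 p ⟨hp, rfl⟩
    rw [c1, c2]
  have hfval : ∀ (p : Fin n × Fin n) (hp : p ∈ T) (h : p.1 ∈ D),
      (tFun T huniq ⟨p.1, h⟩).1 = p.2 := by
    intro p hp h
    simp only [tFun]
    rw [hchoose p hp h]
  have hfinj : Function.Injective (tFun T huniq) := by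
    intro d d' h
    have h1 := Finset.choose_mem (fun p => p.1 = d.1) T (huniq d.1 d.2)
    have h2 := Finset.choose_mem (fun p => p.1 = d'.1) T (huniq d'.1 d'.2)
    have h' : (T.choose (fun p => p.1 = d.1) (huniq d.1 d.2)).2
        = (T.choose (fun p => p.1 = d'.1) (huniq d'.1 d'.2)).2 := congrArg Subtype.val h
    have heq := hsnd h1 h2 h'
    have e1 := Finset.choose_property (fun p => p.1 = d.1) T (huniq d.1 d.2)
    have e2 := Finset.choose_property (fun p => p.1 = d'.1) T (huniq d'.1 d'.2)
    exact Subtype.ext (by rw [← e1, ← e2, heq])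
  have hcDR : Fintype.card {x // x ∈ D} = Fintype.card {y // y ∈ R} := by
    simp [hcardD, hcardR]
  set eDR : {x // x ∈ D} ≃ {y // y ∈ R} :=
    Equiv.ofBijective (tFun T huniq)
      ((Fintype.bijective_iff_injective_and_card _).mpr ⟨hfinj, hcDR⟩) with heDR
  have eC : {x // ¬ x ∈ D} ≃ {y // ¬ y ∈ R} := by
    apply Fintype.equivOfCardEq
    rw [Fintype.card_subtype_compl, Fintype.card_subtype_compl]
    simp [hcDR]
  set w₀ : Equiv.Perm (Fin n) :=
    (Equiv.sumCompl (· ∈ D)).symm.trans ((eDR.sumCongr eC).trans (Equiv.sumCompl (· ∈ R))) with hw₀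
  have hw₀spec : ∀ p ∈ T, w₀ p.1 = p.2 := by
    intro p hp
    have hmem : p.1 ∈ D := Finset.mem_image_of_mem Prod.fst hp
    simp only [hw₀, Equiv.trans_apply]
    rw [Equiv.sumCompl_symm_apply_of_pos (p := (· ∈ D)) (a := p.1) hmem]
    simp only [Equiv.sumCongr_apply, Sum.map_inl, Equiv.sumCompl_apply_inl]
    show (eDR ⟨p.1, hmem⟩).1 = p.2
    rw [heDR]
    exact hfval p hp hmem
  have ecoset : {w : Equiv.Perm (Fin n) // ∀ p ∈ T, w p.1 = p.2} ≃
      {u : Equiv.Perm (Fin n) // ∀ a, ¬ (¬ a ∈ R) → u a = a} := by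
    refine ⟨fun w => ⟨w.1 * w₀⁻¹, ?_⟩, fun u => ⟨u.1 * w₀, ?_⟩, ?_, ?_⟩
    · intro a ha
      have ha' : a ∈ R := not_not.mp ha
      obtain ⟨p, hp, hpa⟩ := Finset.mem_image.mp ha'
      have hinv : w₀⁻¹ a = p.1 := by
        rw [← hpa, ← hw₀spec p hp]; simp
      show w.1 (w₀⁻¹ a) = a
      rw [hinv, w.2 p hp, hpa]
    · intro p hp
      show u.1 (w₀ p.1) = p.2
      rw [hw₀spec p hp]
      exact u.2 p.2 (not_not.mpr (Finset.mem_image_of_mem Prod.snd hp))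
    · intro w; ext; simp
    · intro u; ext; simp
  have e2 : Equiv.Perm {a : Fin n // ¬ a ∈ R} ≃
      {u : Equiv.Perm (Fin n) // ∀ a, ¬ (¬ a ∈ R) → u a = a} :=
    Equiv.Perm.subtypeEquivSubtypePerm (fun a : Fin n => ¬ a ∈ R)
  have hcard : (Finset.univ.filter (fun w : Equiv.Perm (Fin n) => ∀ p ∈ T, w p.1 = p.2)).card
      = Fintype.card {w : Equiv.Perm (Fin n) // ∀ p ∈ T, w p.1 = p.2} :=
    (Fintype.card_subtype _).symm
  rw [hcard, Fintype.card_congr (ecoset.trans e2.symm), Fintype.card_perm,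
    Fintype.card_subtype_compl, Fintype.card_fin, Fintype.card_coe, hcardR]

/-- For a fixed parking content `b` (1-based: `b (j) ≤ j+1` for `j : Fin n`, weakly
increasing, positive), the generating function of strict excedances of `π^{b,w}`
over all permutations `w` equals `Σ_k rook_k(B_b) (n-k)! (t-1)^k`, where the board
`B_b` consists of cells `(r,c)` (0-based) with `r + 1 < b c`. -/
theorem stmt7 {n : ℕ} (b : Fin n → ℕ)
    (hmono : Monotone b) (hle : ∀ j : Fin n, b j ≤ j.val + 1) (hpos : ∀ j, 1 ≤ b j) :
    (∑ w : Equiv.Perm (Fin n),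
        (X : ℤ[X]) ^ (Nat.card {i : Fin n // i.val + 1 < b (w i)}))
      = ∑ k ∈ Finset.range (n + 1),
          (Nat.card {S : Finset (Fin n × Fin n) //
              S.card = k ∧ (∀ p ∈ S, p.1.val + 1 < b p.2) ∧
              (∀ p ∈ S, ∀ q ∈ S, p ≠ q → p.1 ≠ q.1 ∧ p.2 ≠ q.2)} : ℤ[X])
            * (Nat.factorial (n - k) : ℤ[X]) * (X - 1) ^ k := by
  classical
  set Bset : Finset (Fin n × Fin n) :=
    Finset.univ.filter (fun p : Fin n × Fin n => p.1.val + 1 < b p.2) with hBset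
  -- Step 1: per-permutation expansion
  have step1 : ∀ w : Equiv.Perm (Fin n),
      (X : ℤ[X]) ^ (Nat.card {i : Fin n // i.val + 1 < b (w i)})
        = ∑ T ∈ (Bset.filter (fun p => w p.1 = p.2)).powerset, (X - 1) ^ T.card := by
    intro w
    have himg : Bset.filter (fun p => w p.1 = p.2)
        = (Finset.univ.filter (fun i : Fin n => i.val + 1 < b (w i))).image (fun i => (i, w i)) := by
      ext p
      simp only [hBset, Finset.mem_filter, Finset.mem_image, Finset.filter_filter,
        Finset.mem_univ, true_and]
      constructor
      · rintro ⟨h1, h2⟩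
        exact ⟨p.1, by rw [h2]; exact h1, by rw [h2]⟩
      · rintro ⟨i, hi, rfl⟩
        exact ⟨hi, rfl⟩
    have hcard : (Bset.filter (fun p => w p.1 = p.2)).card
        = Nat.card {i : Fin n // i.val + 1 < b (w i)} := by
      rw [himg, Finset.card_image_of_injective _ (fun a c h => congrArg Prod.fst h),
        Nat.card_eq_fintype_card, Fintype.card_subtype]
    rw [pow_sum_powerset, sub_add_cancel, hcard]
  rw [Finset.sum_congr rfl (fun w _ => step1 w)]
  -- Step 2: swap sums
  have hpow : ∀ w : Equiv.Perm (Fin n), (Bset.filter (fun p => w p.1 = p.2)).powerset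
      = Bset.powerset.filter (fun T => ∀ p ∈ T, w p.1 = p.2) := by
    intro w
    ext T
    simp only [Finset.mem_powerset, Finset.mem_filter, Finset.subset_iff, Finset.mem_filter]
    constructor
    · intro h
      exact ⟨fun p hp => (h hp).1, fun p hp => (h hp).2⟩
    · rintro ⟨h1, h2⟩ p hp
      exact ⟨h1 hp, h2 p hp⟩
  calc ∑ w : Equiv.Perm (Fin n), ∑ T ∈ (Bset.filter (fun p => w p.1 = p.2)).powerset,
        ((X : ℤ[X]) - 1) ^ T.card
      = ∑ w : Equiv.Perm (Fin n), ∑ T ∈ Bset.powerset,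
          if (∀ p ∈ T, w p.1 = p.2) then ((X : ℤ[X]) - 1) ^ T.card else 0 := by
        refine Finset.sum_congr rfl fun w _ => ?_
        rw [hpow w, Finset.sum_filter]
    _ = ∑ T ∈ Bset.powerset, ∑ w : Equiv.Perm (Fin n),
          if (∀ p ∈ T, w p.1 = p.2) then ((X : ℤ[X]) - 1) ^ T.card else 0 :=
        Finset.sum_comm
    _ = ∑ T ∈ Bset.powerset,
          (Finset.univ.filter (fun w : Equiv.Perm (Fin n) => ∀ p ∈ T, w p.1 = p.2)).card
            • ((X : ℤ[X]) - 1) ^ T.card := by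
        refine Finset.sum_congr rfl fun T _ => ?_
        rw [← Finset.sum_filter, Finset.sum_const]
    _ = ∑ k ∈ Finset.range (n + 1),
          (Nat.card {S : Finset (Fin n × Fin n) //
              S.card = k ∧ (∀ p ∈ S, p.1.val + 1 < b p.2) ∧
              (∀ p ∈ S, ∀ q ∈ S, p ≠ q → p.1 ≠ q.1 ∧ p.2 ≠ q.2)} : ℤ[X])
            * (Nat.factorial (n - k) : ℤ[X]) * (X - 1) ^ k := by
        set NA : Finset (Fin n × Fin n) → Prop :=
          fun T => ∀ p ∈ T, ∀ q ∈ T, p ≠ q → p.1 ≠ q.1 ∧ p.2 ≠ q.2 with hNA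
        have hNAinj : ∀ T, NA T → Set.InjOn Prod.fst (T : Set (Fin n × Fin n))
            ∧ Set.InjOn Prod.snd (T : Set (Fin n × Fin n)) := by
          intro T h
          constructor
          · intro p hp q hq hpq
            by_contra hne
            exact (h p hp q hq hne).1 hpq
          · intro p hp q hq hpq
            by_contra hne
            exact (h p hp q hq hne).2 hpq
        -- restrict to nonattacking
        have hrestrict : ∑ T ∈ Bset.powerset,
              (Finset.univ.filter (fun w : Equiv.Perm (Fin n) => ∀ p ∈ T, w p.1 = p.2)).card
                • ((X : ℤ[X]) - 1) ^ T.card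
            = ∑ T ∈ Bset.powerset.filter NA,
              (Finset.univ.filter (fun w : Equiv.Perm (Fin n) => ∀ p ∈ T, w p.1 = p.2)).card
                • ((X : ℤ[X]) - 1) ^ T.card := by
          refine (Finset.sum_filter_of_ne ?_).symm
          intro T _ hne
          by_contra hNAfail
          apply hne
          have hzero : (Finset.univ.filter
              (fun w : Equiv.Perm (Fin n) => ∀ p ∈ T, w p.1 = p.2)).card = 0 := by
            rw [Finset.card_eq_zero, Finset.filter_eq_empty_iff]
            intro w _
            simp only [hNA, not_forall] at hNAfail
            obtain ⟨p, hp, q, hq, hpq, hor⟩ := hNAfail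
            intro hall
            rcases not_and_or.mp hor with h1 | h1
            · have : p.2 = q.2 := by
                rw [← hall p hp, ← hall q hq, not_not.mp h1]
              exact hpq (Prod.ext (not_not.mp h1) this)
            · have : w p.1 = w q.1 := by rw [hall p hp, hall q hq, not_not.mp h1]
              exact hpq (Prod.ext (w.injective this) (not_not.mp h1))
          rw [hzero, zero_smul]
        rw [hrestrict]
        -- fiberwise
        have hmap : ∀ T ∈ Bset.powerset.filter NA, T.card ∈ Finset.range (n + 1) := by
          intro T hT
          rw [Finset.mem_range, Nat.lt_succ_iff]
          have hinj := (hNAinj T (Finset.mem_filter.mp hT).2).1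
          calc T.card = (T.image Prod.fst).card := (Finset.card_image_of_injOn hinj).symm
            _ ≤ Fintype.card (Fin n) := Finset.card_le_univ _
            _ = n := Fintype.card_fin n
        rw [← Finset.sum_fiberwise_of_maps_to hmap]
        refine Finset.sum_congr rfl fun k _ => ?_
        -- identify the fiber with the subtype
        have hfiber : ((Bset.powerset.filter NA).filter (fun T => T.card = k))
            = Finset.univ.filter (fun S : Finset (Fin n × Fin n) =>
                S.card = k ∧ (∀ p ∈ S, p.1.val + 1 < b p.2) ∧
                (∀ p ∈ S, ∀ q ∈ S, p ≠ q → p.1 ≠ q.1 ∧ p.2 ≠ q.2)) := by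
          ext T
          simp only [Finset.mem_filter, Finset.mem_powerset, Finset.mem_univ, true_and, hNA, hBset,
            Finset.subset_iff, Finset.mem_filter]
          tauto
        have hncard : (Nat.card {S : Finset (Fin n × Fin n) //
            S.card = k ∧ (∀ p ∈ S, p.1.val + 1 < b p.2) ∧
            (∀ p ∈ S, ∀ q ∈ S, p ≠ q → p.1 ≠ q.1 ∧ p.2 ≠ q.2)})
            = ((Bset.powerset.filter NA).filter (fun T => T.card = k)).card := by
          haveI : Fintype {S : Finset (Fin n × Fin n) //
              S.card = k ∧ (∀ p ∈ S, p.1.val + 1 < b p.2) ∧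
              (∀ p ∈ S, ∀ q ∈ S, p ≠ q → p.1 ≠ q.1 ∧ p.2 ≠ q.2)} :=
            Fintype.ofFinite _
          rw [Nat.card_eq_fintype_card]
          refine Fintype.card_of_subtype
            (p := fun S : Finset (Fin n × Fin n) => S.card = k ∧ (∀ p ∈ S, p.1.val + 1 < b p.2) ∧
              (∀ p ∈ S, ∀ q ∈ S, p ≠ q → p.1 ≠ q.1 ∧ p.2 ≠ q.2))
            ((Bset.powerset.filter NA).filter (fun T => T.card = k)) ?_
          intro x
          rw [hfiber]
          simp
        calc ∑ T ∈ (Bset.powerset.filter NA).filter (fun T => T.card = k),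
              (Finset.univ.filter (fun w : Equiv.Perm (Fin n) => ∀ p ∈ T, w p.1 = p.2)).card
                • ((X : ℤ[X]) - 1) ^ T.card
            = ∑ T ∈ (Bset.powerset.filter NA).filter (fun T => T.card = k),
                (Nat.factorial (n - k)) • ((X : ℤ[X]) - 1) ^ k := by
              refine Finset.sum_congr rfl fun T hT => ?_
              simp only [Finset.mem_filter] at hT
              obtain ⟨⟨_, hTNA⟩, hTk⟩ := hT
              rw [count_ext T (hNAinj T hTNA).1 (hNAinj T hTNA).2, hTk]
          _ = ((Bset.powerset.filter NA).filter (fun T => T.card = k)).card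
                • ((Nat.factorial (n - k)) • ((X : ℤ[X]) - 1) ^ k) := Finset.sum_const _
          _ = _ := by
              rw [hncard]
              simp [nsmul_eq_mul, mul_assoc]
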